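/- Let Q ∈ ℝ^{n×n} be symmetric positive definite and R ∈ ℝ^{n×m} have full column rank, and ρ > 0. Then the matrix J = [[−ρQ, −R],[Rᵀ, 0]] has no eigenvalue with nonnegative real part; in particular J is invertible and Hurwitz. -/

import Mathlib

open Matrix

private lemma re_dot' {k l : ℕ} (M : Matrix (Fin k) (Fin l) ℝ) (x : Fin k → ℂ) (y : Fin l → ℂ) :
    (star x ⬝ᵥ (M.map (Complex.ofReal : ℝ → ℂ)).mulVec y).re
      = ∑ i, ∑ j, M i j * ((x i).re * (y j).re + (x i).im * (y j).im) := by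
  simp only [dotProduct, mulVec, Matrix.map_apply, Pi.star_apply, Finset.mul_sum,
    Complex.re_sum]
  refine Finset.sum_congr rfl fun i _ => Finset.sum_congr rfl fun j _ => ?_
  simp [Complex.mul_re, Complex.mul_im]
  ring

private lemma eig_vec' {k : Type*} [Fintype k] [DecidableEq k] (M : Matrix k k ℂ) {μ : ℂ}
    (h : μ ∈ spectrum ℂ M) : ∃ v : k → ℂ, v ≠ 0 ∧ M.mulVec v = μ • v := by
  rw [← AlgEquiv.spectrum_eq (Matrix.toLinAlgEquiv' : Matrix k k ℂ ≃ₐ[ℂ] _) M] at h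
  obtain ⟨v, hv⟩ := (Module.End.hasEigenvalue_iff_mem_spectrum.mpr h).exists_hasEigenvector
  refine ⟨v, hv.2, ?_⟩
  simpa [Matrix.toLinAlgEquiv'_apply, Matrix.toLin'_apply] using hv.apply_eq_smul

private lemma dot_self' {k : Type*} [Fintype k] (x : k → ℂ) :
    star x ⬝ᵥ x = ((∑ i, Complex.normSq (x i) : ℝ) : ℂ) := by
  push_cast
  simp only [dotProduct, Pi.star_apply, RCLike.star_def]
  exact Finset.sum_congr rfl fun i _ => by rw [mul_comm, Complex.mul_conj]

private lemma inj_real' {n m : ℕ} (R : Matrix (Fin n) (Fin m) ℝ) (hR : R.rank = m) :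
    ∀ y : Fin m → ℝ, R.mulVec y = 0 → y = 0 := by
  intro y hy
  have h1 : LinearMap.ker R.mulVecLin = ⊥ := by
    have h2 := LinearMap.finrank_range_add_finrank_ker R.mulVecLin
    rw [Matrix.rank] at hR
    rw [hR] at h2
    simp only [Module.finrank_pi, Fintype.card_fin] at h2
    have : Module.finrank ℝ (LinearMap.ker R.mulVecLin) = 0 := by omega
    exact Submodule.finrank_eq_zero.mp this
  have : y ∈ LinearMap.ker R.mulVecLin := by
    simpa [LinearMap.mem_ker, Matrix.mulVecLin_apply] using hy
  simpa [h1] using this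

private lemma inj_complex' {n m : ℕ} (R : Matrix (Fin n) (Fin m) ℝ) (hR : R.rank = m)
    (y : Fin m → ℂ) (hy : (R.map (Complex.ofReal : ℝ → ℂ)).mulVec y = 0) : y = 0 := by
  have hre : R.mulVec (fun j => (y j).re) = 0 := by
    funext i
    have h2 : ((R.map (Complex.ofReal : ℝ → ℂ)).mulVec y i).re = 0 := by rw [congrFun hy i]; rfl
    simp only [mulVec, dotProduct, Matrix.map_apply, Complex.re_sum] at h2
    simpa [mulVec, dotProduct, Complex.mul_re] using h2
  have him : R.mulVec (fun j => (y j).im) = 0 := by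
    funext i
    have h2 : ((R.map (Complex.ofReal : ℝ → ℂ)).mulVec y i).im = 0 := by rw [congrFun hy i]; rfl
    simp only [mulVec, dotProduct, Matrix.map_apply, Complex.im_sum] at h2
    simpa [mulVec, dotProduct, Complex.mul_im] using h2
  funext j
  exact Complex.ext (congrFun (inj_real' R hR _ hre) j) (congrFun (inj_real' R hR _ him) j)

private lemma main_eig {n m : ℕ} (ρ : ℝ) (hρ : 0 < ρ)
    (Q : Matrix (Fin n) (Fin n) ℝ) (hQ : Q.PosDef)
    (R : Matrix (Fin n) (Fin m) ℝ) (hR : R.rank = m)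
    (μ : ℂ) (hμ : μ ∈ spectrum ℂ ((fromBlocks (-ρ • Q) (-R) Rᵀ 0).map Complex.ofReal)) :
    μ.re < 0 := by
  obtain ⟨v, hv0, hv⟩ := eig_vec' _ hμ
  set x : Fin n → ℂ := v ∘ Sum.inl with hxdef
  set y : Fin m → ℂ := v ∘ Sum.inr with hydef
  have hvxy : v = Sum.elim x y := (Sum.elim_comp_inl_inr v).symm
  rw [Matrix.fromBlocks_map, hvxy, Matrix.fromBlocks_mulVec] at hv
  have h1 : ((-ρ • Q).map (Complex.ofReal : ℝ → ℂ)) *ᵥ x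
      + ((-R).map (Complex.ofReal : ℝ → ℂ)) *ᵥ y = μ • x :=
    funext fun i => by simpa using congrFun hv (Sum.inl i)
  have h2 : ((Rᵀ).map (Complex.ofReal : ℝ → ℂ)) *ᵥ x = μ • y :=
    funext fun i => by simpa [Matrix.map_zero] using congrFun hv (Sum.inr i)
  by_cases hx0 : x = 0
  · -- then R y = 0, so y = 0, so v = 0, contradiction
    rw [hx0] at h1
    have hy0 : y = 0 := by
      apply inj_complex' R hR
      have : ((-R).map (Complex.ofReal : ℝ → ℂ)) *ᵥ y = 0 := by
        simpa using h1
      have hneg : ((-R).map (Complex.ofReal : ℝ → ℂ)) = -(R.map (Complex.ofReal : ℝ → ℂ)) := by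
        ext i j; simp
      rw [hneg, neg_mulVec, neg_eq_zero] at this
      exact this
    exact absurd (by rw [hvxy, hx0, hy0]; ext (i|i) <;> rfl) hv0
  · -- main case
    set xr : Fin n → ℝ := fun i => (x i).re with hxr
    set xi : Fin n → ℝ := fun i => (x i).im with hxi
    have e1 : star x ⬝ᵥ (((-ρ • Q).map (Complex.ofReal : ℝ → ℂ)) *ᵥ x)
        + star x ⬝ᵥ (((-R).map (Complex.ofReal : ℝ → ℂ)) *ᵥ y)
        = μ * ((∑ i, Complex.normSq (x i) : ℝ) : ℂ) := by
      rw [← dotProduct_add, h1, dotProduct_smul, smul_eq_mul, dot_self']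
    have e2 : star y ⬝ᵥ (((Rᵀ).map (Complex.ofReal : ℝ → ℂ)) *ᵥ x)
        = μ * ((∑ i, Complex.normSq (y i) : ℝ) : ℂ) := by
      rw [h2, dotProduct_smul, smul_eq_mul, dot_self']
    set tx : ℝ := ∑ i, Complex.normSq (x i) with htx
    set ty : ℝ := ∑ i, Complex.normSq (y i) with hty
    -- real parts
    have r1 := congrArg Complex.re e1
    have r2 := congrArg Complex.re e2
    simp only [Complex.add_re, Complex.mul_re, Complex.ofReal_re, Complex.ofReal_im,
      mul_zero, sub_zero] at r1 r2
    -- A-term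
    have hA : (star x ⬝ᵥ (((-ρ • Q).map (Complex.ofReal : ℝ → ℂ)) *ᵥ x)).re
        = -ρ * (xr ⬝ᵥ Q *ᵥ xr + xi ⬝ᵥ Q *ᵥ xi) := by
      rw [re_dot']
      simp only [dotProduct, mulVec, Finset.mul_sum, ← Finset.sum_add_distrib, neg_mul,
        ← Finset.sum_neg_distrib]
      refine Finset.sum_congr rfl fun i _ => ?_
      refine Finset.sum_congr rfl fun j _ => ?_
      simp only [Matrix.smul_apply, smul_eq_mul, hxr, hxi]
      ring
    -- B-term + C-term cancel
    have hBC : (star x ⬝ᵥ (((-R).map (Complex.ofReal : ℝ → ℂ)) *ᵥ y)).re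
        + (star y ⬝ᵥ (((Rᵀ).map (Complex.ofReal : ℝ → ℂ)) *ᵥ x)).re = 0 := by
      rw [re_dot', re_dot']
      have hswap : (∑ i : Fin m, ∑ j : Fin n,
            Rᵀ i j * ((y i).re * (x j).re + (y i).im * (x j).im))
          = ∑ j : Fin n, ∑ i : Fin m,
            Rᵀ i j * ((y i).re * (x j).re + (y i).im * (x j).im) := Finset.sum_comm
      rw [hswap, ← Finset.sum_add_distrib]
      refine Finset.sum_eq_zero fun i _ => ?_
      rw [← Finset.sum_add_distrib]
      refine Finset.sum_eq_zero fun j _ => ?_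
      simp only [Matrix.neg_apply, Matrix.transpose_apply]
      ring
    have key : -ρ * (xr ⬝ᵥ Q *ᵥ xr + xi ⬝ᵥ Q *ᵥ xi) = μ.re * (tx + ty) := by
      rw [← hA]
      nlinarith [r1, r2, hBC]
    -- positivity facts
    have hquad : 0 < xr ⬝ᵥ Q *ᵥ xr + xi ⬝ᵥ Q *ᵥ xi := by
      have hxri : xr ≠ 0 ∨ xi ≠ 0 := by
        by_contra h
        push_neg at h
        apply hx0
        funext i
        exact Complex.ext (congrFun h.1 i) (congrFun h.2 i)
      have hsr : 0 ≤ xr ⬝ᵥ Q *ᵥ xr := by simpa using (posSemidef_iff_dotProduct_mulVec.mp hQ.posSemidef).2 xr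
      have hsi : 0 ≤ xi ⬝ᵥ Q *ᵥ xi := by simpa using (posSemidef_iff_dotProduct_mulVec.mp hQ.posSemidef).2 xi
      rcases hxri with h | h
      · have := (posDef_iff_dotProduct_mulVec.mp hQ).2 (x := xr) h
        simp only [star_trivial] at this
        linarith
      · have := (posDef_iff_dotProduct_mulVec.mp hQ).2 (x := xi) h
        simp only [star_trivial] at this
        linarith
    have htxpos : 0 < tx := by
      have ⟨i, hi⟩ : ∃ i, x i ≠ 0 := Function.ne_iff.mp hx0
      exact Finset.sum_pos' (fun j _ => Complex.normSq_nonneg _)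
        ⟨i, Finset.mem_univ i, Complex.normSq_pos.mpr hi⟩
    have htynn : 0 ≤ ty := Finset.sum_nonneg fun j _ => Complex.normSq_nonneg _
    by_contra hc
    push_neg at hc
    nlinarith [key, hquad, htxpos, htynn]

theorem stmt15 {n m : ℕ} (ρ : ℝ) (hρ : 0 < ρ)
    (Q : Matrix (Fin n) (Fin n) ℝ) (hQ : Q.PosDef)
    (R : Matrix (Fin n) (Fin m) ℝ) (hR : R.rank = m) :
    (∀ μ ∈ spectrum ℂ ((Matrix.fromBlocks (-ρ • Q) (-R) Rᵀ 0).map Complex.ofReal),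
      μ.re < 0) ∧
    IsUnit (Matrix.fromBlocks (-ρ • Q) (-R) Rᵀ (0 : Matrix (Fin m) (Fin m) ℝ)).det := by
  refine ⟨fun μ hμ => main_eig ρ hρ Q hQ R hR μ hμ, ?_⟩
  have h0 : (0:ℂ) ∉ spectrum ℂ ((fromBlocks (-ρ • Q) (-R) Rᵀ 0).map Complex.ofReal) := by
    intro h
    simpa using main_eig ρ hρ Q hQ R hR 0 h
  rw [spectrum.zero_notMem_iff] at h0
  have hdetC : IsUnit ((fromBlocks (-ρ • Q) (-R) Rᵀ
      (0 : Matrix (Fin m) (Fin m) ℝ)).map Complex.ofReal).det :=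
    (Matrix.isUnit_iff_isUnit_det _).mp h0
  have hmap : ((fromBlocks (-ρ • Q) (-R) Rᵀ (0 : Matrix (Fin m) (Fin m) ℝ)).map
      Complex.ofReal).det
      = ((fromBlocks (-ρ • Q) (-R) Rᵀ (0 : Matrix (Fin m) (Fin m) ℝ)).det : ℂ) := by
    rw [show (fromBlocks (-ρ • Q) (-R) Rᵀ (0 : Matrix (Fin m) (Fin m) ℝ)).map Complex.ofReal
        = Complex.ofRealHom.mapMatrix (fromBlocks (-ρ • Q) (-R) Rᵀ 0) from rfl,
      ← RingHom.map_det]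
    rfl
  rw [hmap] at hdetC
  rw [isUnit_iff_ne_zero]
  intro h
  rw [h] at hdetC
  simp at hdetC
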